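/- Let m, v, u be natural numbers with v < u and u ≤ m, and let h : ℕ → ℝ be any function. Then Σ over all ordered pairs (i, i') of binary patterns on Fin m with Hamming weight |i| = v and |i'| = u of h(d(i, i')) equals Σ_{t=u}^{v+u} C(m, t) · C(t, u) · C(u, (v+u) − t) · h(2t − (v+u)), where C denotes the binomial coefficient and d the Hamming distance. -/

import Mathlib

/-- Hamming weight of a binary pattern: the number of positions with value true. -/
def patWeight {α : Type*} [Fintype α] (i : α → Bool) : ℕ :=
  (Finset.univ.filter fun x => i x = true).card



open Finset
open scoped symmDiff

variable {α : Type*} [Fintype α] [DecidableEq α]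

lemma count_inter (T : Finset α) (v s : ℕ) (hsv : s ≤ v) :
    ((univ : Finset (Finset α)).filter (fun S => S.card = v ∧ (S ∩ T).card = s)).card
      = T.card.choose s * (Tᶜ.card).choose (v - s) := by
  rw [← Finset.card_powersetCard, ← Finset.card_powersetCard, ← Finset.card_product]
  symm
  apply Finset.card_bij (fun P (_ : P ∈ T.powersetCard s ×ˢ Tᶜ.powersetCard (v - s)) => P.1 ∪ P.2)
  · rintro ⟨A, B⟩ hP
    simp only [Finset.mem_product, Finset.mem_powersetCard] at hP
    obtain ⟨⟨hAT, hAs⟩, hBc, hBv⟩ := hP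
    have hdisj : Disjoint A B := by
      refine Finset.disjoint_left.mpr fun x hxA hxB => ?_
      have := hBc hxB
      simp only [Finset.mem_compl] at this
      exact this (hAT hxA)
    simp only [Finset.mem_filter, Finset.mem_univ, true_and]
    constructor
    · rw [Finset.card_union_of_disjoint hdisj, hAs, hBv]; omega
    · have : (A ∪ B) ∩ T = A := by
        apply Finset.Subset.antisymm
        · intro x hx
          simp only [Finset.mem_inter, Finset.mem_union] at hx
          rcases hx.1 with hxA | hxB
          · exact hxA
          · exact absurd (hBc hxB) (by simp [hx.2])
        · exact Finset.subset_inter Finset.subset_union_left hAT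
      rw [this, hAs]
  · rintro ⟨A, B⟩ hP ⟨A', B'⟩ hP' heq
    simp only [Finset.mem_product, Finset.mem_powersetCard] at hP hP'
    have key : ∀ (A B : Finset α), A ⊆ T → B ⊆ Tᶜ →
        A = (A ∪ B) ∩ T ∧ B = (A ∪ B) \ T := by
      intro A B hAT hBc
      constructor
      · apply Finset.Subset.antisymm (Finset.subset_inter Finset.subset_union_left hAT)
        intro x hx
        simp only [Finset.mem_inter, Finset.mem_union] at hx
        rcases hx.1 with hxA | hxB
        · exact hxA
        · exact absurd (hBc hxB) (by simp [hx.2])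
      · apply Finset.Subset.antisymm
        · intro x hx
          simp only [Finset.mem_sdiff, Finset.mem_union]
          exact ⟨Or.inr hx, by have := hBc hx; simpa using this⟩
        · intro x hx
          simp only [Finset.mem_sdiff, Finset.mem_union] at hx
          rcases hx.1 with hxA | hxB
          · exact absurd (hAT hxA) hx.2
          · exact hxB
    obtain ⟨hA, hB⟩ := key A B hP.1.1 hP.2.1
    obtain ⟨hA', hB'⟩ := key A' B' hP'.1.1 hP'.2.1
    simp only at heq
    exact Prod.ext (by rw [hA, hA', heq]) (by rw [hB, hB', heq])
  · intro S hS
    simp only [Finset.mem_filter] at hS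
    refine ⟨⟨S ∩ T, S \ T⟩, ?_, sup_inf_sdiff S T⟩
    simp only [Finset.mem_product, Finset.mem_powersetCard]
    refine ⟨⟨Finset.inter_subset_right, hS.2.2⟩, fun x hx => ?_, ?_⟩
    · simp only [Finset.mem_sdiff] at hx; simp [hx.2]
    · have := Finset.card_inter_add_card_sdiff S T
      omega

def patSet {m : ℕ} (i : Fin m → Bool) : Finset (Fin m) :=
  Finset.univ.filter (fun x => i x = true)

lemma patWeight_eq {m : ℕ} (i : Fin m → Bool) : patWeight i = (patSet i).card := rfl

lemma hd_eq {m : ℕ} (i i' : Fin m → Bool) :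
    hammingDist i i' = (patSet i).card + (patSet i').card - 2 * ((patSet i ∩ patSet i')).card := by
  have h1 : (Finset.univ.filter fun x => i x ≠ i' x) = patSet i ∆ patSet i' := by
    ext x
    simp only [Finset.mem_filter, Finset.mem_univ, true_and, Finset.mem_symmDiff, patSet,
      Finset.mem_filter]
    cases hx : i x <;> cases hx' : i' x <;> simp
  have h2 : hammingDist i i' = (patSet i ∆ patSet i').card := by
    rw [hammingDist, ← h1]
  rw [h2]
  have h3 : patSet i ∆ patSet i' = (patSet i \ patSet i') ∪ (patSet i' \ patSet i) := rfl
  rw [h3, Finset.card_union_of_disjoint (disjoint_sdiff_sdiff)]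
  have := Finset.card_inter_add_card_sdiff (patSet i) (patSet i')
  have := Finset.card_inter_add_card_sdiff (patSet i') (patSet i)
  have : (patSet i ∩ patSet i').card = (patSet i' ∩ patSet i).card := by rw [Finset.inter_comm]
  omega

lemma choose_key (m v u s : ℕ) (hs : s ≤ v) (hvu : v < u) (hum : u ≤ m) :
    m.choose u * (u.choose s * (m - u).choose (v - s)) =
      m.choose (v + u - s) * (v + u - s).choose u * u.choose s := by
  by_cases ht : v + u - s ≤ m
  · have key := Nat.choose_mul (n := m) (k := v + u - s) (s := u) (by omega)
    have htu : v + u - s - u = v - s := by omega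
    rw [htu] at key
    rw [key]; ring
  · have h1 : m.choose (v + u - s) = 0 := Nat.choose_eq_zero_of_lt (by omega)
    have h2 : (m - u).choose (v - s) = 0 := Nat.choose_eq_zero_of_lt (by omega)
    simp [h1, h2]

/-- Off-diagonal degeneracy collapse between the v-CPF and u-CPF image spaces (v < u):
Σ over pairs of weights v, u of h(d(i,i')) equals
Σ_{t=u}^{v+u} C(m,t)·C(t,u)·C(u,(v+u)−t)·h(2t−(v+u)). -/
theorem sum_offdiag_CPF_pairs_eq_degeneracy_sum (m v u : ℕ)
    (hvu : v < u) (hum : u ≤ m) (h : ℕ → ℝ) :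
    (∑ p ∈ (Finset.univ : Finset ((Fin m → Bool) × (Fin m → Bool))).filter
        (fun p => patWeight p.1 = v ∧ patWeight p.2 = u),
      h (hammingDist p.1 p.2)) =
      ∑ t ∈ Finset.Icc u (v + u),
        (Nat.choose m t * Nat.choose t u * Nat.choose u ((v + u) - t) : ℝ) *
          h (2 * t - (v + u)) := by
  classical
  -- Step 1: transfer to finsets
  have step1 : (∑ p ∈ (Finset.univ : Finset ((Fin m → Bool) × (Fin m → Bool))).filter
        (fun p => patWeight p.1 = v ∧ patWeight p.2 = u),
      h (hammingDist p.1 p.2)) =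
      ∑ q ∈ (Finset.univ : Finset (Finset (Fin m) × Finset (Fin m))).filter
        (fun q => q.1.card = v ∧ q.2.card = u),
      h (q.1.card + q.2.card - 2 * (q.1 ∩ q.2).card) := by
    refine Finset.sum_nbij' (fun p => (patSet p.1, patSet p.2))
      (fun q => (fun x => decide (x ∈ q.1), fun x => decide (x ∈ q.2))) ?_ ?_ ?_ ?_ ?_
    · intro p hp
      simp only [Finset.mem_filter, Finset.mem_univ, true_and] at hp ⊢
      exact ⟨by rw [← patWeight_eq]; exact hp.1, by rw [← patWeight_eq]; exact hp.2⟩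
    · intro q hq
      simp only [Finset.mem_filter, Finset.mem_univ, true_and] at hq ⊢
      have e1 : patSet (fun x => decide (x ∈ q.1)) = q.1 := by ext x; simp [patSet]
      have e2 : patSet (fun x => decide (x ∈ q.2)) = q.2 := by ext x; simp [patSet]
      exact ⟨by rw [patWeight_eq, e1]; exact hq.1, by rw [patWeight_eq, e2]; exact hq.2⟩
    · intro p _
      refine Prod.ext ?_ ?_ <;> · funext x; simp [patSet]
    · intro q _
      refine Prod.ext ?_ ?_ <;> · ext x; simp [patSet]
    · intro p _
      exact congrArg h (hd_eq p.1 p.2)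
  rw [step1]
  -- Step 2: split as double sum
  have step2 : ((Finset.univ : Finset (Finset (Fin m) × Finset (Fin m))).filter
        (fun q => q.1.card = v ∧ q.2.card = u)) =
      (Finset.univ.filter fun S : Finset (Fin m) => S.card = v) ×ˢ
        (Finset.univ.filter fun T : Finset (Fin m) => T.card = u) := by
    rw [← Finset.univ_product_univ]
    ext ⟨S, T⟩
    simp [and_assoc]
  rw [step2, Finset.sum_product, Finset.sum_comm]
  -- Step 3: inner sum over S, fiberwise in (S ∩ T).card
  have step3 : ∀ T ∈ Finset.univ.filter (fun T : Finset (Fin m) => T.card = u),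
      (∑ S ∈ Finset.univ.filter (fun S : Finset (Fin m) => S.card = v),
        h (S.card + T.card - 2 * (S ∩ T).card)) =
      ∑ s ∈ Finset.range (v + 1),
        ((u.choose s * (m - u).choose (v - s) : ℕ) : ℝ) * h (v + u - 2 * s) := by
    intro T hT
    simp only [Finset.mem_filter, Finset.mem_univ, true_and] at hT
    rw [← Finset.sum_fiberwise_of_maps_to (g := fun S => (S ∩ T).card)
      (t := Finset.range (v + 1)) (fun S hS => by
        simp only [Finset.mem_filter, Finset.mem_univ, true_and] at hS
        simp only [Finset.mem_range]
        have : (S ∩ T).card ≤ S.card := Finset.card_le_card Finset.inter_subset_left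
        omega)]
    refine Finset.sum_congr rfl fun s hs => ?_
    simp only [Finset.mem_range] at hs
    have hsv : s ≤ v := by omega
    have hconst : ∀ S ∈ (Finset.univ.filter (fun S : Finset (Fin m) => S.card = v)).filter
        (fun S => (S ∩ T).card = s),
        h (S.card + T.card - 2 * (S ∩ T).card) = h (v + u - 2 * s) := by
      intro S hS
      simp only [Finset.mem_filter, Finset.mem_univ, true_and] at hS
      rw [hS.2, hS.1, hT]
    rw [Finset.sum_congr rfl hconst, Finset.sum_const, nsmul_eq_mul]
    congr 1
    rw [Finset.filter_filter]
    rw [count_inter T v s hsv, hT]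
    have : Tᶜ.card = m - u := by
      rw [Finset.card_compl, hT]
      simp
    rw [this]
  rw [Finset.sum_congr rfl step3, Finset.sum_const]
  -- card of the set of T's
  have cardT : (Finset.univ.filter fun T : Finset (Fin m) => T.card = u).card = m.choose u := by
    rw [← Finset.powerset_univ, ← Finset.powersetCard_eq_filter, Finset.card_powersetCard]
    simp
  rw [cardT, nsmul_eq_mul, Finset.mul_sum]
  -- Step 4: reindex s ↦ v + u - s
  refine Finset.sum_nbij' (fun s => v + u - s) (fun t => v + u - t) ?_ ?_ ?_ ?_ ?_
  · intro s hs; simp only [Finset.mem_range] at hs; simp only [Finset.mem_Icc]; omega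
  · intro t ht; simp only [Finset.mem_Icc] at ht; simp only [Finset.mem_range]; omega
  · intro s hs; simp only [Finset.mem_range] at hs
    show v + u - (v + u - s) = s; omega
  · intro t ht; simp only [Finset.mem_Icc] at ht
    show v + u - (v + u - t) = t; omega
  · intro s hs
    simp only [Finset.mem_range] at hs
    have hsv : s ≤ v := by omega
    have e1 : v + u - (v + u - s) = s := by omega
    have e2 : 2 * (v + u - s) - (v + u) = v + u - 2 * s := by omega
    simp only [e1, e2]
    have h3 : ((m.choose u * (u.choose s * (m - u).choose (v - s)) : ℕ) : ℝ) =
        ((m.choose (v + u - s) * (v + u - s).choose u * u.choose s : ℕ) : ℝ) := by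
      exact_mod_cast congrArg (Nat.cast (R := ℝ)) (choose_key m v u s hsv hvu hum)
    push_cast at h3 ⊢
    linear_combination h (v + u - 2 * s) * h3
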